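/- Let $h_1, \dots, h_N \ge 0$ be nonnegative reals sorted so that $h_1 \le h_2 \le \dots \le h_N$. Suppose $u \ge 0$, $r \in \mathbb{R}_+^N$, $z \in \{0,1\}^N$ satisfy $u + r_i \ge h_i(1 - z_i)$ for all $i \in [N]$. Then for any indices $N \ge j_1 > j_2 > \dots > j_m \ge 1$, setting $h_{j_{m+1}} := 0$, the path inequality $u + \sum_{i=1}^{m} r_{j_i} \ge \sum_{i=1}^{m} (h_{j_i} - h_{j_{i+1}})(1 - z_{j_i})$ holds. -/

import Mathlib

/-- Atamtürk's path inequalities are valid for the robust 0-1 set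
`R⁺ = {(u,r,z) : u + r_i ≥ h_i (1 - z_i)}` with nonnegative sorted `h`. -/
theorem stmt3 (N m : ℕ) (h : Fin N → ℝ) (hnonneg : ∀ i, 0 ≤ h i) (hmono : Monotone h)
    (u : ℝ) (hu : 0 ≤ u) (r : Fin N → ℝ) (hr : ∀ i, 0 ≤ r i)
    (z : Fin N → ℝ) (hz : ∀ i, z i = 0 ∨ z i = 1)
    (hfeas : ∀ i, h i * (1 - z i) ≤ u + r i)
    (j : Fin m → Fin N) (hdec : StrictAnti j) :
    ∑ i : Fin m,
        (h (j i) - (if hi : (i : ℕ) + 1 < m then h (j ⟨(i : ℕ) + 1, hi⟩) else 0))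
          * (1 - z (j i))
      ≤ u + ∑ i : Fin m, r (j i) := by
  revert j
  induction m with
  | zero => intro j _; simpa using hu
  | succ n ih =>
    intro j hdec
    have hz1 : ∀ x, 1 - z x ≤ 1 := by
      intro x; rcases hz x with h' | h' <;> simp [h']
    rcases hz (j 0) with h0 | h0
    · -- z (j 0) = 0 : telescoping bound by h (j 0)
      set G : ℕ → ℝ := fun k => if hk : k < n + 1 then h (j ⟨k, hk⟩) else 0 with hGdef
      have hGcoef : ∀ i : Fin (n + 1),
          (h (j i) - (if hi : (i : ℕ) + 1 < n + 1 then h (j ⟨(i : ℕ) + 1, hi⟩) else 0))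
            = G i - G ((i : ℕ) + 1) := by
        intro i
        simp [hGdef, i.isLt]
        intro hc; have := i.isLt; omega
      have hcoef_nonneg : ∀ i : Fin (n + 1), 0 ≤ G i - G ((i : ℕ) + 1) := by
        intro i
        rw [← hGcoef]
        by_cases hi : (i : ℕ) + 1 < n + 1
        · rw [dif_pos hi]
          have hlt : j ⟨(i : ℕ) + 1, hi⟩ < j i := hdec (by simp [Fin.lt_def])
          linarith [hmono hlt.le]
        · rw [dif_neg hi]; simpa using hnonneg (j i)
      have step : ∀ i : Fin (n + 1),
          (h (j i) - (if hi : (i : ℕ) + 1 < n + 1 then h (j ⟨(i : ℕ) + 1, hi⟩) else 0))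
              * (1 - z (j i))
            ≤ G i - G ((i : ℕ) + 1) := by
        intro i
        rw [hGcoef i]
        calc (G i - G ((i : ℕ) + 1)) * (1 - z (j i))
            ≤ (G i - G ((i : ℕ) + 1)) * 1 :=
              mul_le_mul_of_nonneg_left (hz1 _) (hcoef_nonneg i)
          _ = G i - G ((i : ℕ) + 1) := mul_one _
      have tele : ∑ i : Fin (n + 1), (G i - G ((i : ℕ) + 1)) = h (j 0) := by
        rw [Fin.sum_univ_eq_sum_range (fun k => G k - G (k + 1)) (n + 1),
          Finset.sum_range_sub' G]
        simp [hGdef]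
      have hsum : ∑ i : Fin (n + 1),
          (h (j i) - (if hi : (i : ℕ) + 1 < n + 1 then h (j ⟨(i : ℕ) + 1, hi⟩) else 0))
              * (1 - z (j i)) ≤ h (j 0) := by
        rw [← tele]; exact Finset.sum_le_sum fun i _ => step i
      have hfin : h (j 0) ≤ u + ∑ i : Fin (n + 1), r (j i) := by
        have h1 : h (j 0) * (1 - z (j 0)) ≤ u + r (j 0) := hfeas (j 0)
        have h2 : r (j 0) ≤ ∑ i : Fin (n + 1), r (j i) :=
          Finset.single_le_sum (fun i _ => hr (j i)) (Finset.mem_univ 0)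
        rw [h0] at h1
        simp only [sub_zero, mul_one] at h1
        linarith
      linarith
    · -- z (j 0) = 1 : head term vanishes, use induction hypothesis on the tail
      rw [Fin.sum_univ_succ, Fin.sum_univ_succ]
      have h0term :
          (h (j 0) - (if hi : ((0 : Fin (n + 1)) : ℕ) + 1 < n + 1
              then h (j ⟨((0 : Fin (n + 1)) : ℕ) + 1, hi⟩) else 0)) * (1 - z (j 0)) = 0 := by
        simp [h0]
      rw [h0term]
      have hdec' : StrictAnti (fun i : Fin n => j i.succ) := by
        intro a b hab
        exact hdec (Fin.succ_lt_succ_iff.mpr hab)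
      have htail := ih (fun i : Fin n => j i.succ) hdec'
      have hmatch : ∑ i : Fin n,
          (h (j i.succ) - (if hi : ((i.succ : Fin (n + 1)) : ℕ) + 1 < n + 1
              then h (j ⟨((i.succ : Fin (n + 1)) : ℕ) + 1, hi⟩) else 0)) * (1 - z (j i.succ))
          = ∑ i : Fin n,
          (h (j i.succ) - (if hi : (i : ℕ) + 1 < n
              then h ((fun i : Fin n => j i.succ) ⟨(i : ℕ) + 1, hi⟩) else 0))
              * (1 - z (j i.succ)) := by
        refine Finset.sum_congr rfl fun i _ => ?_
        by_cases hi : (i : ℕ) + 1 < n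
        · rw [dif_pos hi,
            dif_pos (show ((i.succ : Fin (n + 1)) : ℕ) + 1 < n + 1 by
              simpa using Nat.succ_lt_succ hi)]
          have : (⟨((i.succ : Fin (n + 1)) : ℕ) + 1, by simpa using Nat.succ_lt_succ hi⟩ :
              Fin (n + 1)) = (⟨(i : ℕ) + 1, hi⟩ : Fin n).succ := Fin.ext (by simp)
          rw [this]
        · rw [dif_neg hi,
            dif_neg (show ¬(((i.succ : Fin (n + 1)) : ℕ) + 1 < n + 1) by
              simpa using fun hc => hi (Nat.lt_of_succ_lt_succ hc))]
      rw [hmatch, zero_add]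
      have hr0 : 0 ≤ r (j 0) := hr (j 0)
      calc ∑ i : Fin n,
          (h (j i.succ) - (if hi : (i : ℕ) + 1 < n
              then h ((fun i : Fin n => j i.succ) ⟨(i : ℕ) + 1, hi⟩) else 0))
              * (1 - z (j i.succ))
          ≤ u + ∑ i : Fin n, r (j i.succ) := htail
        _ ≤ u + (r (j 0) + ∑ i : Fin n, r (j i.succ)) := by linarith
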